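/- Let (Ω, 𝔉, P) be a probability space, let Y : (0,∞) × Ω → ℝ^d be jointly measurable such that for P-almost every ω the path s ↦ Y_s(ω) is right-continuous, and let Σ : Ω → (0,∞) be measurable. Assume that for each s > 0 the law of ω ↦ (Y_s(ω), Σ(ω)) on ℝ^d × ℝ has a density g_s(y,σ) with respect to Lebesgue measure, jointly measurable in (s,y,σ), such that (i) for every 0 < c < C, sup{g_s(y,σ) : s ∈ [c,C], y ∈ ℝ^d, σ ∈ ℝ} < ∞, and (ii) for every (y,σ), the map s ↦ g_s(y,σ) is right-continuous on (0,∞). Then for every K > 1 and every bounded continuous F : ℝ^d → ℝ: E[F(Y_Σ)·𝟙(Σ ∈ [1/K, K])] = ∫_{ℝ^d} ∫_{1/K}^{K} g_σ(y,σ) F(y) dσ dy. -/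

import Mathlib

open MeasureTheory Set Filter

/-- Lemma 4.1: if `(Y_s, Σ)` has joint densities `g_s(y,σ)` that are bounded on compact
time intervals separated from zero and right-continuous in `s`, then for every `K > 1`
and every bounded continuous `F`,
`E[F(Y_Σ) 𝟙(Σ ∈ [1/K, K])] = ∫ dy ∫_{1/K}^K g_σ(y,σ) F(y) dσ`. -/
theorem stmt_7
    {d : ℕ} {Ω : Type*} [MeasurableSpace Ω] (P : Measure Ω) [IsProbabilityMeasure P]
    (Y : ℝ → Ω → (Fin d → ℝ))
    (hY_meas : Measurable fun q : ℝ × Ω => Y q.1 q.2)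
    (hY_rc : ∀ᵐ ω ∂P, ∀ s : ℝ, 0 < s → ContinuousWithinAt (fun u => Y u ω) (Set.Ici s) s)
    (S : Ω → ℝ) (hS_meas : Measurable S) (hS_pos : ∀ ω, 0 < S ω)
    (g : ℝ → (Fin d → ℝ) → ℝ → ℝ)
    (hg_meas : Measurable fun q : ℝ × (Fin d → ℝ) × ℝ => g q.1 q.2.1 q.2.2)
    (hg_nonneg : ∀ s y σ, 0 ≤ g s y σ)
    (hg_density : ∀ s : ℝ, 0 < s →
        Measure.map (fun ω => (Y s ω, S ω)) P
          = volume.withDensity (fun q : (Fin d → ℝ) × ℝ => ENNReal.ofReal (g s q.1 q.2)))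
    (hg_bdd : ∀ c C : ℝ, 0 < c → c < C →
        ∃ M, ∀ s ∈ Set.Icc c C, ∀ (y : Fin d → ℝ) (σ : ℝ), g s y σ ≤ M)
    (hg_rc : ∀ (y : Fin d → ℝ) (σ : ℝ), ∀ s : ℝ, 0 < s →
        ContinuousWithinAt (fun u => g u y σ) (Set.Ici s) s)
    (K : ℝ) (hK : 1 < K)
    (F : (Fin d → ℝ) → ℝ) (hF_cont : Continuous F) (hF_bdd : ∃ M, ∀ y, |F y| ≤ M) :
    ∫ ω, F (Y (S ω) ω) * Set.indicator (Set.Icc (1/K) K) (fun _ => (1:ℝ)) (S ω) ∂P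
      = ∫ y : Fin d → ℝ, ∫ σ in Set.Icc (1/K) K, g σ y σ * F y := by
  classical
  obtain ⟨MF, hMF⟩ := hF_bdd
  have hMF0 : 0 ≤ MF := le_trans (abs_nonneg _) (hMF 0)
  set I : Set ℝ := Set.Icc (1/K) K with hI_def
  have hK0 : (0:ℝ) < K := lt_trans one_pos hK
  have hIK : (0:ℝ) < 1/K := by positivity
  have hI_meas : MeasurableSet I := measurableSet_Icc
  have hI_pos : ∀ σ ∈ I, (0:ℝ) < σ := fun σ hσ => lt_of_lt_of_le hIK hσ.1
  -- the dyadic upper rounding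
  set τ : ℕ → ℝ → ℝ := fun n s => (⌈s * 2^n⌉ : ℤ) / 2^n with hτ_def
  have h2pos : ∀ n : ℕ, (0:ℝ) < 2^n := fun n => by positivity
  have hτ_ge : ∀ n s, s ≤ τ n s := by
    intro n s
    rw [hτ_def, le_div_iff₀ (h2pos n)]
    exact Int.le_ceil _
  have hτ_lt : ∀ n s, τ n s < s + ((2:ℝ)^n)⁻¹ := by
    intro n s
    rw [hτ_def, div_lt_iff₀ (h2pos n)]
    have := Int.ceil_lt_add_one (s * 2^n)
    calc ((⌈s * 2^n⌉ : ℤ) : ℝ) < s * 2^n + 1 := this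
    _ = (s + ((2:ℝ)^n)⁻¹) * 2^n := by field_simp
  have hτ_meas : ∀ n, Measurable (τ n) := by
    intro n
    exact (measurable_from_top.comp ((measurable_id.mul_const _).ceil)).div_const _
  have hτ_tendsto : ∀ s : ℝ, Tendsto (fun n => τ n s) atTop (nhdsWithin s (Set.Ici s)) := by
    intro s
    apply tendsto_nhdsWithin_of_tendsto_nhds_of_eventually_within
    · have hup : Tendsto (fun n : ℕ => s + ((2:ℝ)^n)⁻¹) atTop (nhds s) := by
        have : Tendsto (fun n : ℕ => ((2:ℝ)^n)⁻¹) atTop (nhds 0) := by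
          simp_rw [← inv_pow]
          exact tendsto_pow_atTop_nhds_zero_of_lt_one (by norm_num) (by norm_num)
        simpa using tendsto_const_nhds.add this
      exact tendsto_of_tendsto_of_tendsto_of_le_of_le tendsto_const_nhds hup
        (fun n => hτ_ge n s) (fun n => le_of_lt (hτ_lt n s))
    · exact Eventually.of_forall fun n => hτ_ge n s
  have hτ_mem : ∀ n : ℕ, ∀ σ ∈ I, τ n σ ∈ Set.Icc (1/K) (K+1) := by
    intro n σ hσ
    refine ⟨le_trans hσ.1 (hτ_ge n σ), ?_⟩
    have h1 : ((2:ℝ)^n)⁻¹ ≤ 1 := by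
      rw [inv_le_one_iff₀]
      right; exact one_le_pow₀ (by norm_num)
    have := hτ_lt n σ
    nlinarith [hσ.2]
  -- measurability helpers
  have hφ_meas : ∀ t : ℝ, Measurable fun ω => (Y t ω, S ω) := fun t =>
    (hY_meas.comp (measurable_const.prodMk measurable_id)).prodMk hS_meas
  have hgt_meas : ∀ t : ℝ, Measurable fun q : (Fin d → ℝ) × ℝ => g t q.1 q.2 := fun t =>
    hg_meas.comp (measurable_const.prodMk measurable_id)
  -- total mass of density
  have hg_mass : ∀ t : ℝ, 0 < t →
      ∫⁻ q : (Fin d → ℝ) × ℝ, ENNReal.ofReal (g t q.1 q.2) = 1 := by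
    intro t ht
    have h1 : (volume.withDensity fun q : (Fin d → ℝ) × ℝ => ENNReal.ofReal (g t q.1 q.2))
        Set.univ = 1 := by
      rw [← hg_density t ht, Measure.map_apply (hφ_meas t) MeasurableSet.univ]
      simp
    rwa [withDensity_apply _ MeasurableSet.univ, Measure.restrict_univ] at h1
  have hg_int : ∀ t : ℝ, 0 < t →
      Integrable (fun q : (Fin d → ℝ) × ℝ => g t q.1 q.2) volume := by
    intro t ht
    refine ⟨(hgt_meas t).aestronglyMeasurable, ?_⟩
    show (∫⁻ q : (Fin d → ℝ) × ℝ, (‖g t q.1 q.2‖₊ : ENNReal)) < ⊤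
    have : ∀ q : (Fin d → ℝ) × ℝ, (‖g t q.1 q.2‖₊ : ENNReal) = ENNReal.ofReal (g t q.1 q.2) :=
      fun q => by rw [← Real.enorm_eq_ofReal (hg_nonneg _ _ _), enorm_eq_nnnorm]
    simp_rw [this, hg_mass t ht]
    exact ENNReal.one_lt_top
  -- the key identity at a fixed time
  have key : ∀ t : ℝ, 0 < t → ∀ h : (Fin d → ℝ) × ℝ → ℝ, Measurable h →
      ∫ ω, h (Y t ω, S ω) ∂P = ∫ q : (Fin d → ℝ) × ℝ, g t q.1 q.2 * h q := by
    intro t ht h hh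
    rw [← integral_map (hφ_meas t).aemeasurable hh.aestronglyMeasurable, hg_density t ht]
    have hd : (fun q : (Fin d → ℝ) × ℝ => ENNReal.ofReal (g t q.1 q.2))
        = fun q => ((Real.toNNReal (g t q.1 q.2) : NNReal) : ENNReal) := rfl
    have hm : Measurable fun q : (Fin d → ℝ) × ℝ => (g t q.1 q.2).toNNReal :=
      measurable_real_toNNReal.comp (hgt_meas t)
    rw [hd, integral_withDensity_eq_integral_smul hm h]
    congr 1; ext q
    rw [NNReal.smul_def, smul_eq_mul, Real.coe_toNNReal _ (hg_nonneg _ _ _)]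
  -- integrability of bounded measurable functions w.r.t. P
  have PInt : ∀ u : Ω → ℝ, Measurable u → (∃ c, ∀ ω, |u ω| ≤ c) → Integrable u P := by
    rintro u hu ⟨c, hc⟩
    exact (integrable_const c).mono' hu.aestronglyMeasurable
      (Eventually.of_forall fun ω => by simpa [Real.norm_eq_abs] using hc ω)
  -- dyadic decomposition of the indicator of I
  set A : ℕ → ℤ → Set ℝ := fun n k => {σ : ℝ | ⌈σ * 2^n⌉ = k} with hA_def
  have hA_meas : ∀ n k, MeasurableSet (A n k) := fun n k =>
    ((measurable_id.mul_const ((2:ℝ)^n)).ceil) (measurableSet_singleton k)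
  set N : ℕ → ℤ := fun n => ⌈K * 2^n⌉ with hN_def
  have hmemA : ∀ n : ℕ, ∀ σ ∈ I, ⌈σ * 2^n⌉ ∈ Finset.Icc 1 (N n) := by
    intro n σ hσ
    rw [Finset.mem_Icc]
    constructor
    · have : (0:ℤ) < ⌈σ * 2^n⌉ := Int.ceil_pos.2 (mul_pos (hI_pos σ hσ) (h2pos n))
      omega
    · exact Int.ceil_le_ceil (mul_le_mul_of_nonneg_right hσ.2 (le_of_lt (h2pos n)))
  have hτA : ∀ (n : ℕ) (k : ℤ) (σ : ℝ), σ ∈ A n k → τ n σ = (k:ℝ)/2^n := by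
    intro n k σ hσ
    have h1 : ⌈σ * 2^n⌉ = k := hσ
    simp only [hτ_def]
    rw [h1]
  have hsplit : ∀ (n : ℕ) (σ : ℝ), I.indicator (fun _ => (1:ℝ)) σ
      = ∑ k ∈ Finset.Icc 1 (N n), (A n k ∩ I).indicator (fun _ => (1:ℝ)) σ := by
    intro n σ
    by_cases hσ : σ ∈ I
    · rw [Set.indicator_of_mem hσ]
      symm
      calc (∑ k ∈ Finset.Icc 1 (N n), (A n k ∩ I).indicator (fun _ => (1:ℝ)) σ)
          = (A n ⌈σ * 2^n⌉ ∩ I).indicator (fun _ => (1:ℝ)) σ := by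
            refine Finset.sum_eq_single_of_mem _ (hmemA n σ hσ) fun k _ hne => ?_
            refine Set.indicator_of_notMem ?_ _
            rintro ⟨h1, -⟩
            have h1' : ⌈σ * 2 ^ n⌉ = k := h1
            exact hne h1'.symm
      _ = 1 := by
            have hmem : σ ∈ A n ⌈σ * 2^n⌉ ∩ I := ⟨rfl, hσ⟩
            exact Set.indicator_of_mem hmem _
    · rw [Set.indicator_of_notMem hσ, Finset.sum_eq_zero]
      intro k _
      exact Set.indicator_of_notMem (fun h => hσ h.2) _
  -- the partition identity at level n
  have part : ∀ f : (Fin d → ℝ) → ℝ, Measurable f → ∀ c : ℝ, (∀ y, |f y| ≤ c) → ∀ n : ℕ,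
      Integrable (fun q : (Fin d → ℝ) × ℝ =>
        g (τ n q.2) q.1 q.2 * f q.1 * I.indicator (fun _ => (1:ℝ)) q.2) volume ∧
      ∫ ω, f (Y (τ n (S ω)) ω) * I.indicator (fun _ => (1:ℝ)) (S ω) ∂P
        = ∫ q : (Fin d → ℝ) × ℝ,
            g (τ n q.2) q.1 q.2 * f q.1 * I.indicator (fun _ => (1:ℝ)) q.2 := by
    intro f hf c hc n
    have hc0 : 0 ≤ c := le_trans (abs_nonneg _) (hc 0)
    set J : ℤ → Set ℝ := fun k => A n k ∩ I with hJ_def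
    have hJ_meas : ∀ k, MeasurableSet (J k) := fun k => (hA_meas n k).inter hI_meas
    set T : ℤ → ((Fin d → ℝ) × ℝ) → ℝ := fun k q =>
      g (τ n q.2) q.1 q.2 * f q.1 * (J k).indicator (fun _ => (1:ℝ)) q.2 with hT_def
    have hTeq : ∀ k (q : (Fin d → ℝ) × ℝ),
        T k q = g ((k:ℝ)/2^n) q.1 q.2 * (f q.1 * (J k).indicator (fun _ => (1:ℝ)) q.2) := by
      intro k q
      by_cases hq : q.2 ∈ J k
      · rw [hT_def]; simp only []
        rw [hτA n k q.2 hq.1, mul_assoc]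
      · rw [hT_def]; simp only []
        rw [Set.indicator_of_notMem hq, mul_zero, mul_zero, mul_zero]
    have hh_meas : ∀ k, Measurable fun q : (Fin d → ℝ) × ℝ =>
        f q.1 * (J k).indicator (fun _ => (1:ℝ)) q.2 := fun k =>
      (hf.comp measurable_fst).mul
        ((measurable_const.indicator (hJ_meas k)).comp measurable_snd)
    have hh_bdd : ∀ k (q : (Fin d → ℝ) × ℝ),
        ‖f q.1 * (J k).indicator (fun _ => (1:ℝ)) q.2‖ ≤ c := by
      intro k q
      rw [Real.norm_eq_abs, abs_mul]
      have hind : |(J k).indicator (fun _ => (1:ℝ)) q.2| ≤ 1 := by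
        by_cases h : q.2 ∈ J k <;> simp [Set.indicator_of_mem, Set.indicator_of_notMem, h]
      calc |f q.1| * |(J k).indicator (fun _ => (1:ℝ)) q.2| ≤ c * 1 :=
            mul_le_mul (hc q.1) hind (abs_nonneg _) hc0
      _ = c := mul_one c
    have hkpos : ∀ k ∈ Finset.Icc 1 (N n), (0:ℝ) < (k:ℝ)/2^n := by
      intro k hk
      have h1 : (1:ℤ) ≤ k := (Finset.mem_Icc.1 hk).1
      have h1' : (1:ℝ) ≤ (k:ℝ) := by exact_mod_cast h1
      positivity
    have hT_int : ∀ k ∈ Finset.Icc 1 (N n), Integrable (T k) volume := by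
      intro k hk
      have := ((hg_int _ (hkpos k hk)).bdd_mul (hh_meas k).aestronglyMeasurable
        (Eventually.of_forall (hh_bdd k)))
      refine this.congr (Eventually.of_forall fun q => ?_)
      rw [hTeq k q]; ring
    -- pointwise splitting of the full integrand on the product side
    have hTsum : ∀ q : (Fin d → ℝ) × ℝ,
        g (τ n q.2) q.1 q.2 * f q.1 * I.indicator (fun _ => (1:ℝ)) q.2
          = ∑ k ∈ Finset.Icc 1 (N n), T k q := by
      intro q
      rw [hsplit n q.2, Finset.mul_sum]
    have hInt : Integrable (fun q : (Fin d → ℝ) × ℝ =>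
        g (τ n q.2) q.1 q.2 * f q.1 * I.indicator (fun _ => (1:ℝ)) q.2) volume := by
      refine (integrable_finset_sum _ hT_int).congr (Eventually.of_forall fun q => ?_)
      exact (hTsum q).symm
    refine ⟨hInt, ?_⟩
    -- pointwise splitting on the Ω side
    have e1 : ∀ ω, f (Y (τ n (S ω)) ω) * I.indicator (fun _ => (1:ℝ)) (S ω)
        = ∑ k ∈ Finset.Icc 1 (N n),
            f (Y ((k:ℝ)/2^n) ω) * (J k).indicator (fun _ => (1:ℝ)) (S ω) := by
      intro ω
      rw [hsplit n (S ω), Finset.mul_sum]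
      refine Finset.sum_congr rfl fun k _ => ?_
      by_cases hA : S ω ∈ J k
      · rw [hτA n k (S ω) hA.1]
      · rw [Set.indicator_of_notMem hA, mul_zero, mul_zero]
    have hΩint : ∀ k ∈ Finset.Icc 1 (N n), Integrable
        (fun ω => f (Y ((k:ℝ)/2^n) ω) * (J k).indicator (fun _ => (1:ℝ)) (S ω)) P := by
      intro k _
      refine PInt _ ?_ ⟨c, fun ω => ?_⟩
      · exact (hf.comp (hY_meas.comp (measurable_const.prodMk measurable_id))).mul
          ((measurable_const.indicator (hJ_meas k)).comp hS_meas)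
      · have := hh_bdd k (Y ((k:ℝ)/2^n) ω, S ω)
        rwa [Real.norm_eq_abs] at this
    calc ∫ ω, f (Y (τ n (S ω)) ω) * I.indicator (fun _ => (1:ℝ)) (S ω) ∂P
        = ∫ ω, (∑ k ∈ Finset.Icc 1 (N n),
            f (Y ((k:ℝ)/2^n) ω) * (J k).indicator (fun _ => (1:ℝ)) (S ω)) ∂P :=
          integral_congr_ae (Eventually.of_forall e1)
      _ = ∑ k ∈ Finset.Icc 1 (N n), ∫ ω,
            f (Y ((k:ℝ)/2^n) ω) * (J k).indicator (fun _ => (1:ℝ)) (S ω) ∂P :=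
          integral_finset_sum _ hΩint
      _ = ∑ k ∈ Finset.Icc 1 (N n), ∫ q : (Fin d → ℝ) × ℝ,
            g ((k:ℝ)/2^n) q.1 q.2 * (f q.1 * (J k).indicator (fun _ => (1:ℝ)) q.2) := by
          refine Finset.sum_congr rfl fun k hk => ?_
          exact key ((k:ℝ)/2^n) (hkpos k hk)
            (fun q => f q.1 * (J k).indicator (fun _ => (1:ℝ)) q.2) (hh_meas k)
      _ = ∑ k ∈ Finset.Icc 1 (N n), ∫ q : (Fin d → ℝ) × ℝ, T k q := by
          refine Finset.sum_congr rfl fun k _ => ?_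
          exact integral_congr_ae (Eventually.of_forall fun q => (hTeq k q).symm)
      _ = ∫ q : (Fin d → ℝ) × ℝ, ∑ k ∈ Finset.Icc 1 (N n), T k q :=
          (integral_finset_sum _ hT_int).symm
      _ = ∫ q : (Fin d → ℝ) × ℝ,
            g (τ n q.2) q.1 q.2 * f q.1 * I.indicator (fun _ => (1:ℝ)) q.2 :=
          integral_congr_ae (Eventually.of_forall fun q => (hTsum q).symm)
  -- measurability of the time-shifted densities
  have hgτ_meas : ∀ n, Measurable fun q : (Fin d → ℝ) × ℝ => g (τ n q.2) q.1 q.2 := fun n =>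
    hg_meas.comp (((hτ_meas n).comp measurable_snd).prodMk
      (measurable_fst.prodMk measurable_snd))
  have hdiag_meas : Measurable fun q : (Fin d → ℝ) × ℝ => g q.2 q.1 q.2 :=
    hg_meas.comp (measurable_snd.prodMk (measurable_fst.prodMk measurable_snd))
  -- pointwise convergence of the densities
  have hptwise : ∀ q : (Fin d → ℝ) × ℝ, q.2 ∈ I →
      Tendsto (fun n => g (τ n q.2) q.1 q.2) atTop (nhds (g q.2 q.1 q.2)) := by
    intro q hq
    exact Tendsto.comp (hg_rc q.1 q.2 q.2 (hI_pos _ hq)) (hτ_tendsto q.2)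
  have hpt_full : ∀ (f : (Fin d → ℝ) → ℝ) (q : (Fin d → ℝ) × ℝ),
      Tendsto (fun n => g (τ n q.2) q.1 q.2 * f q.1 * I.indicator (fun _ => (1:ℝ)) q.2) atTop
        (nhds (g q.2 q.1 q.2 * f q.1 * I.indicator (fun _ => (1:ℝ)) q.2)) := by
    intro f q
    by_cases hq : q.2 ∈ I
    · exact ((hptwise q hq).mul_const _).mul_const _
    · simp only [Set.indicator_of_notMem hq, mul_zero]
      exact tendsto_const_nhds
  -- limit on the Ω side
  have limΩ : ∀ f : (Fin d → ℝ) → ℝ, Continuous f → ∀ c : ℝ, (∀ y, |f y| ≤ c) →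
      Tendsto (fun n => ∫ ω, f (Y (τ n (S ω)) ω) * I.indicator (fun _ => (1:ℝ)) (S ω) ∂P)
        atTop (nhds (∫ ω, f (Y (S ω) ω) * I.indicator (fun _ => (1:ℝ)) (S ω) ∂P)) := by
    intro f hf c hc
    refine tendsto_integral_of_dominated_convergence (fun _ => c) ?_ (integrable_const c) ?_ ?_
    · intro n
      exact ((hf.measurable.comp (hY_meas.comp
          (((hτ_meas n).comp hS_meas).prodMk measurable_id))).mul
        ((measurable_const.indicator hI_meas).comp hS_meas)).aestronglyMeasurable
    · intro n
      refine Eventually.of_forall fun ω => ?_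
      have hind : |I.indicator (fun _ => (1:ℝ)) (S ω)| ≤ 1 := by
        by_cases h : S ω ∈ I <;> simp [h]
      rw [Real.norm_eq_abs, abs_mul]
      calc |f (Y (τ n (S ω)) ω)| * |I.indicator (fun _ => (1:ℝ)) (S ω)| ≤ c * 1 :=
            mul_le_mul (hc _) hind (abs_nonneg _) (le_trans (abs_nonneg _) (hc 0))
      _ = c := mul_one c
    · refine hY_rc.mono fun ω hω => ?_
      have h1 : Tendsto (fun n => Y (τ n (S ω)) ω) atTop (nhds (Y (S ω) ω)) :=
        Tendsto.comp (hω (S ω) (hS_pos ω)) (hτ_tendsto (S ω))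
      exact (Tendsto.comp hf.continuousAt.tendsto h1).mul_const _
  -- limit on the density side, for compactly supported f
  have limD : ∀ f : (Fin d → ℝ) → ℝ, Measurable f → ∀ c : ℝ, (∀ y, |f y| ≤ c) →
      ∀ R : ℝ, (∀ y : Fin d → ℝ, R ≤ ‖y‖ → f y = 0) →
      Tendsto (fun n => ∫ q : (Fin d → ℝ) × ℝ,
          g (τ n q.2) q.1 q.2 * f q.1 * I.indicator (fun _ => (1:ℝ)) q.2) atTop
        (nhds (∫ q : (Fin d → ℝ) × ℝ,
          g q.2 q.1 q.2 * f q.1 * I.indicator (fun _ => (1:ℝ)) q.2)) := by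
    intro f hf c hc R hR
    have hc0 : 0 ≤ c := le_trans (abs_nonneg _) (hc 0)
    have hKlt : 1/K < K + 1 := by
      have h1 : 1/K < 1 := by rw [div_lt_one hK0]; linarith
      linarith
    obtain ⟨M, hM⟩ := hg_bdd (1/K) (K+1) hIK hKlt
    have hM0 : 0 ≤ M := le_trans (hg_nonneg (1/K) 0 0)
      (hM (1/K) ⟨le_refl _, le_of_lt hKlt⟩ 0 0)
    set B : Set ((Fin d → ℝ) × ℝ) := (Metric.closedBall (0 : Fin d → ℝ) R) ×ˢ I with hB_def
    have hB_meas : MeasurableSet B := measurableSet_closedBall.prod hI_meas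
    have hB_fin : volume B < ⊤ := by
      rw [hB_def, Measure.volume_eq_prod, Measure.prod_prod]
      exact ENNReal.mul_lt_top measure_closedBall_lt_top measure_Icc_lt_top
    refine tendsto_integral_of_dominated_convergence (B.indicator fun _ => M * c) ?_ ?_ ?_ ?_
    · intro n
      exact (((hgτ_meas n).mul (hf.comp measurable_fst)).mul
        ((measurable_const.indicator hI_meas).comp measurable_snd)).aestronglyMeasurable
    · exact (integrable_indicator_iff hB_meas).2 (integrableOn_const hB_fin.ne)
    · intro n
      refine Eventually.of_forall fun q => ?_
      have hnn : 0 ≤ B.indicator (fun _ => M * c) q :=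
        Set.indicator_nonneg (fun _ _ => mul_nonneg hM0 hc0) q
      by_cases hqI : q.2 ∈ I
      · by_cases hqB : R ≤ ‖q.1‖
        · rw [hR q.1 hqB]
          simpa using hnn
        · have hqmem : q ∈ B := ⟨mem_closedBall_zero_iff.2 (le_of_lt (not_le.1 hqB)), hqI⟩
          rw [Set.indicator_of_mem hqmem, Set.indicator_of_mem hqI, mul_one,
            Real.norm_eq_abs, abs_mul, abs_of_nonneg (hg_nonneg _ _ _)]
          exact mul_le_mul (hM _ (hτ_mem n q.2 hqI) q.1 q.2) (hc q.1) (abs_nonneg _) hM0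
      · rw [Set.indicator_of_notMem hqI, mul_zero]
        simpa using hnn
    · exact Eventually.of_forall fun q => hpt_full f q
  -- the mass of I under the law of S is at most 1
  have hPle : ∫ ω, (1:ℝ) * I.indicator (fun _ => (1:ℝ)) (S ω) ∂P ≤ 1 := by
    have h1 : ∫ ω, (1:ℝ) * I.indicator (fun _ => (1:ℝ)) (S ω) ∂P ≤ ∫ _ω, (1:ℝ) ∂P := by
      refine integral_mono (PInt _ ?_ ⟨1, fun ω => ?_⟩) (integrable_const 1) fun ω => ?_
      · exact measurable_const.mul ((measurable_const.indicator hI_meas).comp hS_meas)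
      · by_cases h : S ω ∈ I <;> simp [h]
      · by_cases h : S ω ∈ I <;> simp [h]
    simpa using h1
  -- integrability of the diagonal density on I
  have hdiag_int : Integrable (fun q : (Fin d → ℝ) × ℝ =>
      g q.2 q.1 q.2 * I.indicator (fun _ => (1:ℝ)) q.2) volume := by
    have hmeas : Measurable fun q : (Fin d → ℝ) × ℝ =>
        g q.2 q.1 q.2 * I.indicator (fun _ => (1:ℝ)) q.2 :=
      hdiag_meas.mul ((measurable_const.indicator hI_meas).comp measurable_snd)
    have hnn : ∀ q : (Fin d → ℝ) × ℝ, 0 ≤ g q.2 q.1 q.2 * I.indicator (fun _ => (1:ℝ)) q.2 :=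
      fun q => mul_nonneg (hg_nonneg _ _ _) (Set.indicator_nonneg (fun _ _ => zero_le_one) _)
    have hnn' : ∀ (n : ℕ) (q : (Fin d → ℝ) × ℝ),
        0 ≤ g (τ n q.2) q.1 q.2 * (1:ℝ) * I.indicator (fun _ => (1:ℝ)) q.2 :=
      fun n q => mul_nonneg (mul_nonneg (hg_nonneg _ _ _) zero_le_one)
        (Set.indicator_nonneg (fun _ _ => zero_le_one) _)
    refine ⟨hmeas.aestronglyMeasurable, ?_⟩
    show (∫⁻ q : (Fin d → ℝ) × ℝ,
      (‖g q.2 q.1 q.2 * I.indicator (fun _ => (1:ℝ)) q.2‖₊ : ENNReal)) < ⊤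
    have hlim : ∀ q : (Fin d → ℝ) × ℝ, Tendsto (fun n => ENNReal.ofReal
          (g (τ n q.2) q.1 q.2 * (1:ℝ) * I.indicator (fun _ => (1:ℝ)) q.2)) atTop
        (nhds (ENNReal.ofReal (g q.2 q.1 q.2 * (1:ℝ) * I.indicator (fun _ => (1:ℝ)) q.2))) :=
      fun q => (ENNReal.continuous_ofReal.tendsto _).comp (hpt_full (fun _ => 1) q)
    have hGn_meas : ∀ n, Measurable fun q : (Fin d → ℝ) × ℝ =>
        ENNReal.ofReal (g (τ n q.2) q.1 q.2 * (1:ℝ) * I.indicator (fun _ => (1:ℝ)) q.2) := fun n =>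
      ENNReal.measurable_ofReal.comp (((hgτ_meas n).mul measurable_const).mul
        ((measurable_const.indicator hI_meas).comp measurable_snd))
    have hGn_le : ∀ n, (∫⁻ q : (Fin d → ℝ) × ℝ,
        ENNReal.ofReal (g (τ n q.2) q.1 q.2 * (1:ℝ) * I.indicator (fun _ => (1:ℝ)) q.2)) ≤ 1 := by
      intro n
      obtain ⟨hint, hid⟩ := part (fun _ => (1:ℝ)) measurable_const 1 (fun _ => by norm_num) n
      rw [← ofReal_integral_eq_lintegral_ofReal hint (Eventually.of_forall (hnn' n)), ← hid]
      exact ENNReal.ofReal_le_one.2 hPle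
    calc (∫⁻ q : (Fin d → ℝ) × ℝ,
          (‖g q.2 q.1 q.2 * I.indicator (fun _ => (1:ℝ)) q.2‖₊ : ENNReal))
        = ∫⁻ q : (Fin d → ℝ) × ℝ,
            ENNReal.ofReal (g q.2 q.1 q.2 * (1:ℝ) * I.indicator (fun _ => (1:ℝ)) q.2) := by
          refine lintegral_congr fun q => ?_
          rw [mul_one, ← Real.enorm_eq_ofReal (hnn q), enorm_eq_nnnorm]
      _ = ∫⁻ q : (Fin d → ℝ) × ℝ, liminf (fun n => ENNReal.ofReal
            (g (τ n q.2) q.1 q.2 * (1:ℝ) * I.indicator (fun _ => (1:ℝ)) q.2)) atTop :=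
          lintegral_congr fun q => ((hlim q).liminf_eq).symm
      _ ≤ liminf (fun n => ∫⁻ q : (Fin d → ℝ) × ℝ, ENNReal.ofReal
            (g (τ n q.2) q.1 q.2 * (1:ℝ) * I.indicator (fun _ => (1:ℝ)) q.2)) atTop :=
          lintegral_liminf_le hGn_meas
      _ ≤ liminf (fun _ : ℕ => (1 : ENNReal)) atTop :=
          Filter.liminf_le_liminf (Eventually.of_forall hGn_le)
      _ = 1 := Filter.liminf_const 1
      _ < ⊤ := ENNReal.one_lt_top
  -- continuous cutoffs
  set χ : ℕ → (Fin d → ℝ) → ℝ := fun m y => max 0 (min 1 ((m:ℝ) - ‖y‖)) with hχ_def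
  have hχ_cont : ∀ m, Continuous (χ m) := fun m =>
    continuous_const.max (continuous_const.min (continuous_const.sub continuous_norm))
  have hχ_nonneg : ∀ m y, 0 ≤ χ m y := fun m y => le_max_left 0 _
  have hχ_le_one : ∀ m y, χ m y ≤ 1 := fun m y => max_le zero_le_one (min_le_left _ _)
  have hχ_zero : ∀ (m : ℕ) (y : Fin d → ℝ), (m:ℝ) ≤ ‖y‖ → χ m y = 0 := by
    intro m y h
    exact max_eq_left (le_trans (min_le_right _ _) (by linarith))
  have hχ_one : ∀ y : Fin d → ℝ, Tendsto (fun m => χ m y) atTop (nhds 1) := by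
    intro y
    have hev : ∀ᶠ m : ℕ in atTop, χ m y = 1 := by
      filter_upwards [eventually_ge_atTop (⌈‖y‖⌉₊ + 1)] with m hm
      have h1 := Nat.le_ceil ‖y‖
      have hm' : ((⌈‖y‖⌉₊ + 1 : ℕ):ℝ) ≤ (m:ℝ) := by exact_mod_cast hm
      push_cast at hm'
      have hy : ‖y‖ + 1 ≤ (m:ℝ) := by linarith
      simp only [hχ_def]
      rw [min_eq_left (by linarith), max_eq_right zero_le_one]
    exact tendsto_const_nhds.congr' (by filter_upwards [hev] with m hm using hm.symm)
  have hFm_meas : ∀ m, Measurable fun y => F y * χ m y := fun m =>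
    hF_cont.measurable.mul (hχ_cont m).measurable
  have hFm_bdd : ∀ (m : ℕ) (y : Fin d → ℝ), |F y * χ m y| ≤ MF := by
    intro m y
    rw [abs_mul]
    calc |F y| * |χ m y| ≤ MF * 1 := by
          refine mul_le_mul (hMF y) ?_ (abs_nonneg _) hMF0
          rw [abs_of_nonneg (hχ_nonneg m y)]
          exact hχ_le_one m y
    _ = MF := mul_one MF
  -- the identity for the truncated functions
  have hstep : ∀ m : ℕ,
      ∫ ω, (fun y => F y * χ m y) (Y (S ω) ω) * I.indicator (fun _ => (1:ℝ)) (S ω) ∂P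
        = ∫ q : (Fin d → ℝ) × ℝ,
            g q.2 q.1 q.2 * (fun y => F y * χ m y) q.1 * I.indicator (fun _ => (1:ℝ)) q.2 := by
    intro m
    have h1 := limΩ (fun y => F y * χ m y) (hF_cont.mul (hχ_cont m)) MF (hFm_bdd m)
    have h2 := limD (fun y => F y * χ m y) (hFm_meas m) MF (hFm_bdd m) m
      (fun y hy => by show F y * χ m y = 0; rw [hχ_zero m y hy, mul_zero])
    have h3 : ∀ n, ∫ ω, (fun y => F y * χ m y) (Y (τ n (S ω)) ω)
          * I.indicator (fun _ => (1:ℝ)) (S ω) ∂P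
        = ∫ q : (Fin d → ℝ) × ℝ, g (τ n q.2) q.1 q.2 * (fun y => F y * χ m y) q.1
          * I.indicator (fun _ => (1:ℝ)) q.2 :=
      fun n => (part _ (hFm_meas m) MF (hFm_bdd m) n).2
    exact tendsto_nhds_unique (h1.congr h3) h2
  -- let the truncation go to infinity
  have hYS_meas : Measurable fun ω => Y (S ω) ω :=
    hY_meas.comp (hS_meas.prodMk measurable_id)
  have hLHS : Tendsto (fun m => ∫ ω, (fun y => F y * χ m y) (Y (S ω) ω)
        * I.indicator (fun _ => (1:ℝ)) (S ω) ∂P) atTop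
      (nhds (∫ ω, F (Y (S ω) ω) * I.indicator (fun _ => (1:ℝ)) (S ω) ∂P)) := by
    refine tendsto_integral_of_dominated_convergence (fun _ => MF) ?_ (integrable_const MF) ?_ ?_
    · intro m
      exact (((hFm_meas m).comp hYS_meas).mul
        ((measurable_const.indicator hI_meas).comp hS_meas)).aestronglyMeasurable
    · intro m
      refine Eventually.of_forall fun ω => ?_
      have hind : |I.indicator (fun _ => (1:ℝ)) (S ω)| ≤ 1 := by
        by_cases h : S ω ∈ I <;> simp [h]
      rw [Real.norm_eq_abs, abs_mul]
      calc |F (Y (S ω) ω) * χ m (Y (S ω) ω)| * |I.indicator (fun _ => (1:ℝ)) (S ω)|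
          ≤ MF * 1 := mul_le_mul (hFm_bdd m _) hind (abs_nonneg _) hMF0
      _ = MF := mul_one MF
    · refine Eventually.of_forall fun ω => ?_
      simpa using ((tendsto_const_nhds.mul (hχ_one (Y (S ω) ω))).mul_const
        (I.indicator (fun _ => (1:ℝ)) (S ω)))
  have hRHS : Tendsto (fun m => ∫ q : (Fin d → ℝ) × ℝ,
        g q.2 q.1 q.2 * (fun y => F y * χ m y) q.1 * I.indicator (fun _ => (1:ℝ)) q.2) atTop
      (nhds (∫ q : (Fin d → ℝ) × ℝ,
        g q.2 q.1 q.2 * F q.1 * I.indicator (fun _ => (1:ℝ)) q.2)) := by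
    refine tendsto_integral_of_dominated_convergence
      (fun q => MF * (g q.2 q.1 q.2 * I.indicator (fun _ => (1:ℝ)) q.2)) ?_
      (hdiag_int.const_mul MF) ?_ ?_
    · intro m
      exact ((hdiag_meas.mul ((hFm_meas m).comp measurable_fst)).mul
        ((measurable_const.indicator hI_meas).comp measurable_snd)).aestronglyMeasurable
    · intro m
      refine Eventually.of_forall fun q => ?_
      have hindnn : 0 ≤ I.indicator (fun _ => (1:ℝ)) q.2 :=
        Set.indicator_nonneg (fun _ _ => zero_le_one) q.2
      have habs : ‖g q.2 q.1 q.2 * (F q.1 * χ m q.1) * I.indicator (fun _ => (1:ℝ)) q.2‖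
          = g q.2 q.1 q.2 * |F q.1 * χ m q.1| * I.indicator (fun _ => (1:ℝ)) q.2 := by
        rw [Real.norm_eq_abs, abs_mul, abs_mul, abs_of_nonneg (hg_nonneg _ _ _),
          abs_of_nonneg hindnn]
      rw [habs]
      calc g q.2 q.1 q.2 * |F q.1 * χ m q.1| * I.indicator (fun _ => (1:ℝ)) q.2
          ≤ g q.2 q.1 q.2 * MF * I.indicator (fun _ => (1:ℝ)) q.2 :=
            mul_le_mul_of_nonneg_right
              (mul_le_mul_of_nonneg_left (hFm_bdd m q.1) (hg_nonneg _ _ _)) hindnn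
      _ = MF * (g q.2 q.1 q.2 * I.indicator (fun _ => (1:ℝ)) q.2) := by ring
    · refine Eventually.of_forall fun q => ?_
      simpa using ((tendsto_const_nhds.mul (tendsto_const_nhds.mul (hχ_one q.1))).mul_const
        (I.indicator (fun _ => (1:ℝ)) q.2))
  have hfinal : ∫ ω, F (Y (S ω) ω) * I.indicator (fun _ => (1:ℝ)) (S ω) ∂P
      = ∫ q : (Fin d → ℝ) × ℝ, g q.2 q.1 q.2 * F q.1 * I.indicator (fun _ => (1:ℝ)) q.2 :=
    tendsto_nhds_unique (hLHS.congr hstep) hRHS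
  -- Fubini
  have hInt_full : Integrable (fun q : (Fin d → ℝ) × ℝ =>
      g q.2 q.1 q.2 * F q.1 * I.indicator (fun _ => (1:ℝ)) q.2) volume := by
    refine (hdiag_int.bdd_mul (hF_cont.measurable.comp measurable_fst).aestronglyMeasurable
      (Eventually.of_forall fun q => by rw [Real.norm_eq_abs]; exact hMF q.1)).congr
      (Eventually.of_forall fun q => by simp only [Function.comp_apply]; ring)
  calc ∫ ω, F (Y (S ω) ω) * I.indicator (fun _ => (1:ℝ)) (S ω) ∂P
      = ∫ q : (Fin d → ℝ) × ℝ, g q.2 q.1 q.2 * F q.1 * I.indicator (fun _ => (1:ℝ)) q.2 :=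
        hfinal
    _ = ∫ y : Fin d → ℝ, ∫ σ : ℝ, g σ y σ * F y * I.indicator (fun _ => (1:ℝ)) σ := by
        rw [Measure.volume_eq_prod] at hInt_full ⊢
        exact integral_prod _ hInt_full
    _ = ∫ y : Fin d → ℝ, ∫ σ in I, g σ y σ * F y := by
        refine integral_congr_ae (Eventually.of_forall fun y => ?_)
        have hpt : ∀ σ : ℝ, g σ y σ * F y * I.indicator (fun _ => (1:ℝ)) σ
            = I.indicator (fun σ => g σ y σ * F y) σ := by
          intro σ
          by_cases h : σ ∈ I <;> simp [Set.indicator_of_mem, Set.indicator_of_notMem, h]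
        show (∫ σ : ℝ, g σ y σ * F y * I.indicator (fun _ => (1:ℝ)) σ)
          = ∫ σ in I, g σ y σ * F y
        rw [integral_congr_ae (Eventually.of_forall hpt), integral_indicator hI_meas]
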